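/- Let R be a Noetherian ring and R₁ ⊇ R a ring that is finitely generated as an R-module. If A is a flat R-algebra such that A ⊗_R R₁ is a finitely generated R₁-algebra, then A is a finitely generated R-algebra. -/

import Mathlib

open TensorProduct

attribute [local instance] Algebra.TensorProduct.rightAlgebra

/-- Let `R` be a Noetherian ring and `R₁ ⊇ R` a ring that is
finitely generated as an `R`-module. If `A` is a flat `R`-algebra such that
`A ⊗_R R₁` is a finitely generated `R₁`-algebra, then `A` is a finitely generated
`R`-algebra. -/
theorem stmt12 {R R₁ A : Type*} [CommRing R] [IsNoetherianRing R]
    [CommRing R₁] [Algebra R R₁] (hinj : Function.Injective (algebraMap R R₁))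
    [Module.Finite R R₁]
    [CommRing A] [Algebra R A] [Module.Flat R A]
    (hfg : Algebra.FiniteType R₁ (R₁ ⊗[R] A)) :
    Algebra.FiniteType R A := by
  classical
  have hmf : Module.Finite A (R₁ ⊗[R] A) := by
    obtain ⟨s, hs⟩ := Module.Finite.fg_top (R := R) (M := R₁)
    refine ⟨⟨s.image (fun x => x ⊗ₜ[R] (1 : A)), eq_top_iff.2 ?_⟩⟩
    rintro z -
    induction z with
    | zero => exact Submodule.zero_mem _
    | add x y hx hy => exact Submodule.add_mem _ hx hy
    | tmul r₁ a =>
      set f : R₁ →ₗ[R] R₁ ⊗[R] A := (TensorProduct.mk R R₁ A).flip 1 with hf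
      have h0 : r₁ ⊗ₜ[R] (1 : A) ∈ Submodule.map f (Submodule.span R (s : Set R₁)) := by
        rw [hs]
        exact ⟨r₁, trivial, rfl⟩
      rw [Submodule.map_span] at h0
      have h1 : r₁ ⊗ₜ[R] (1 : A) ∈
          Submodule.span A ((s.image (fun x => x ⊗ₜ[R] (1 : A))) : Set (R₁ ⊗[R] A)) := by
        have := Submodule.span_le_restrictScalars R A (f '' (s : Set R₁)) h0
        rw [Finset.coe_image]
        exact this
      have h2 : r₁ ⊗ₜ[R] a = a • (r₁ ⊗ₜ[R] (1 : A)) := by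
        rw [Algebra.smul_def]
        show r₁ ⊗ₜ[R] a = (1 : R₁) ⊗ₜ[R] a * r₁ ⊗ₜ[R] (1 : A)
        rw [Algebra.TensorProduct.tmul_mul_tmul, one_mul, mul_one]
      rw [h2]
      exact Submodule.smul_mem _ _ h1
  have hinj2 : Function.Injective (algebraMap A (R₁ ⊗[R] A)) := by
    have hr := Module.Flat.rTensor_preserves_injective_linearMap
      (M := A) (Algebra.linearMap R R₁) hinj
    have heq : ⇑(algebraMap A (R₁ ⊗[R] A)) =
        (LinearMap.rTensor A (Algebra.linearMap R R₁)) ∘ ⇑(TensorProduct.lid R A).symm := by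
      funext a
      show (1 : R₁) ⊗ₜ[R] a = _
      simp
    rw [heq]
    exact hr.comp (TensorProduct.lid R A).symm.injective
  have hft : Algebra.FiniteType R (R₁ ⊗[R] A) :=
    Algebra.FiniteType.trans (Module.Finite.finiteType R₁) hfg
  exact ⟨fg_of_fg_of_fg R A (R₁ ⊗[R] A) hft.out hmf.fg_top hinj2⟩
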